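/- Let g2 = rr_{3,1} = span{e_3, e_4, e_5, e_6} with nonzero brackets [e_3,e_4] = e_4 and [e_3,e_5] = e_5, with complex structure J2(e_3) = e_6, J2(e_4) = e_5, and inner product making the basis orthogonal with |e_3|² = |e_6|² = σ > 0 and |e_4| = |e_5| = 1. Then (rr_{3,1}, J2, k2) is a Hermitian Lie algebra whose Lee form is θ2 = −2e^3, and it is locally conformally Kähler: dω2 = θ2 ∧ ω2 and dθ2 = 0, where ω2 = σe^{36} + e^{45}. -/

import Mathlib

open scoped BigOperators

section TCPDefs

variable {V V₁ V₂ W : Type*} [AddCommGroup V] [Module ℝ V]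
  [AddCommGroup V₁] [Module ℝ V₁] [AddCommGroup V₂] [Module ℝ V₂]
  [AddCommGroup W] [Module ℝ W]

/-- Real-bilinearity of a two-argument map. -/
def IsBilinMap (f : V₁ → V₂ → W) : Prop :=
  (∀ x y z, f (x + y) z = f x z + f y z) ∧ (∀ (c : ℝ) x z, f (c • x) z = c • f x z) ∧
  (∀ x y z, f x (y + z) = f x y + f x z) ∧ (∀ (c : ℝ) x z, f x (c • z) = c • f x z)

/-- The Jacobi identity for a bracket. -/
def Jacobi (l : V → V → V) : Prop :=
  ∀ u v w, l (l u v) w + l (l v w) u + l (l w u) v = 0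

/-- A (real) Lie bracket: bilinear, antisymmetric, Jacobi. -/
def IsLieBracket (l : V → V → V) : Prop :=
  IsBilinMap l ∧ (∀ u v, l u v = -l v u) ∧ Jacobi l

/-- D is a derivation of the bracket l. -/
def IsDeriv (l : V → V → V) (D : V → V) : Prop :=
  ∀ u v, D (l u v) = l (D u) v + l u (D v)

/-- Compatibility of the couple (ρ1, ρ2). -/
def Compat (ρ1 : V₁ → V₂ → V₂) (ρ2 : V₂ → V₁ → V₁) : Prop :=
  (∀ (x : V₁) (a b : V₂), ρ1 (ρ2 a x) b = ρ1 (ρ2 b x) a) ∧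
  (∀ (x y : V₁) (a : V₂), ρ2 (ρ1 x a) y = ρ2 (ρ1 y a) x)

/-- The twisted cartesian product bracket on V₁ × V₂. -/
def twBr (l1 : V₁ → V₁ → V₁) (l2 : V₂ → V₂ → V₂)
    (ρ1 : V₁ → V₂ → V₂) (ρ2 : V₂ → V₁ → V₁) (u v : V₁ × V₂) : V₁ × V₂ :=
  (l1 u.1 v.1 + ρ2 u.2 v.1 - ρ2 v.2 u.1, l2 u.2 v.2 + ρ1 u.1 v.2 - ρ1 v.1 u.2)

/-- The product almost complex structure. -/
def prodJ (J1 : V₁ → V₁) (J2 : V₂ → V₂) (u : V₁ × V₂) : V₁ × V₂ := (J1 u.1, J2 u.2)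

/-- The product metric. -/
def prodK (k1 : V₁ → V₁ → ℝ) (k2 : V₂ → V₂ → ℝ) (u v : V₁ × V₂) : ℝ :=
  k1 u.1 v.1 + k2 u.2 v.2

/-- Nijenhuis tensor of J with respect to the bracket l. -/
def nijenhuis (l : V → V → V) (J : V → V) (u v : V) : V :=
  l (J u) (J v) - l u v - J (l (J u) v + l u (J v))

/-- Fundamental 2-form ω(u,v) = k(Ju, v). -/
def fund (k : V → V → ℝ) (J : V → V) (u v : V) : ℝ := k (J u) v

/-- Chevalley–Eilenberg differential of a 2-form. -/
def d2 (l : V → V → V) (ω : V → V → ℝ) (u v w : V) : ℝ :=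
  -ω (l u v) w + ω (l u w) v - ω (l v w) u

/-- Chevalley–Eilenberg differential of a 1-form. -/
def d1 (l : V → V → V) (θ : V → ℝ) (u v : V) : ℝ := -θ (l u v)

/-- Wedge product of a 1-form with a 2-form, evaluated on three vectors. -/
def wedge12 (θ : V → ℝ) (ω : V → V → ℝ) (u v w : V) : ℝ :=
  θ u * ω v w - θ v * ω u w + θ w * ω u v

/-- The Koszul formula characterizing the Levi-Civita product of (g, k). -/
def IsLeviCivita (k : V → V → ℝ) (l : V → V → V) (nab : V → V → V) : Prop :=
  ∀ u v w, 2 * k (nab u v) w = k (l u v) w - k (l v w) u - k (l u w) v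

/-- Codifferential of a 2-form ω relative to a family E (an orthonormal basis)
    and a Levi-Civita product nab:  d*ω(X) = −Σ_i (∇_{E_i}ω)(E_i, X). -/
def codiff {ι : Type*} [Fintype ι] (E : ι → V) (nab : V → V → V)
    (ω : V → V → ℝ) (X : V) : ℝ :=
  -∑ i, (-(ω (nab (E i) (E i)) X) - ω (E i) (nab (E i) X))

/-- Lee form θ = −d*ω ∘ J. -/
def leeForm {ι : Type*} [Fintype ι] (E : ι → V) (nab : V → V → V)
    (k : V → V → ℝ) (J : V → V) (X : V) : ℝ :=
  -codiff E nab (fund k J) (J X)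

/-- A family is orthonormal with respect to k. -/
def Orthonormal' {ι : Type*} [DecidableEq ι] (k : V → V → ℝ) (E : ι → V) : Prop :=
  ∀ i j, k (E i) (E j) = if i = j then 1 else 0

/-- k is an inner product: symmetric, bilinear, positive definite. -/
def IsInner (k : V → V → ℝ) : Prop :=
  IsBilinMap k ∧ (∀ u v, k u v = k v u) ∧ (∀ u, u ≠ 0 → 0 < k u u)

/-- A Hermitian structure on the Lie algebra (V, l). -/
def IsHermitian (l : V → V → V) (J : V → V) (k : V → V → ℝ) : Prop :=
  IsInner k ∧ (∀ u, J (J u) = -u) ∧ (∀ u v, nijenhuis l J u v = 0) ∧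
  (∀ u v, k (J u) (J v) = k u v)

end TCPDefs

/-- The bracket of rr_{3,1} (indices 0,1,2,3 stand for e₃,e₄,e₅,e₆):
[e₃,e₄]=e₄, [e₃,e₅]=e₅. -/
def br16 (u v : Fin 4 → ℝ) : Fin 4 → ℝ :=
  ![0, u 0 * v 1 - u 1 * v 0, u 0 * v 2 - u 2 * v 0, 0]

/-- J₂(e₃)=e₆, J₂(e₄)=e₅ with J₂² = −Id. -/
def J16 (u : Fin 4 → ℝ) : Fin 4 → ℝ := ![-u 3, -u 2, u 1, u 0]

/-- The metric: basis orthogonal, |e₃|²=|e₆|²=σ, |e₄|=|e₅|=1. -/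
def k16 (σ : ℝ) (u v : Fin 4 → ℝ) : ℝ :=
  σ * (u 0 * v 0) + u 1 * v 1 + u 2 * v 2 + σ * (u 3 * v 3)

/-- The Lee form θ₂ = −2e³. -/
def th16 (u : Fin 4 → ℝ) : ℝ := -2 * u 0
namespace RR31aux

lemma ksymm (σ : ℝ) (u v : Fin 4 → ℝ) : k16 σ u v = k16 σ v u := by
  simp only [k16]; ring

lemma kJ (σ : ℝ) (u v : Fin 4 → ℝ) : k16 σ (J16 u) v = -(k16 σ u (J16 v)) := by
  simp only [k16, J16, Matrix.cons_val_zero, Matrix.cons_val_one, Matrix.head_cons,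
    Matrix.cons_val_two, Matrix.tail_cons, Matrix.cons_val_three]
  ring

/-- k16 as a linear map in the first argument. -/
def kfstL (σ : ℝ) (v : Fin 4 → ℝ) : (Fin 4 → ℝ) →ₗ[ℝ] ℝ where
  toFun u := k16 σ u v
  map_add' x y := by simp only [k16, Pi.add_apply]; ring
  map_smul' c x := by simp only [k16, Pi.smul_apply, smul_eq_mul, RingHom.id_apply]; ring

lemma complete {ι : Type} [Fintype ι] [DecidableEq ι] {σ : ℝ}
    (b : Module.Basis ι ℝ (Fin 4 → ℝ)) (hb : Orthonormal' (k16 σ) ⇑b) (u : Fin 4 → ℝ) :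
    ∑ i, k16 σ u (b i) • b i = u := by
  have hrepr : ∀ j, k16 σ u (b j) = b.repr u j := by
    intro j
    conv_lhs => rw [← b.sum_repr u]
    have h : k16 σ (∑ i, b.repr u i • b i) (b j)
        = kfstL σ (b j) (∑ i, b.repr u i • b i) := rfl
    rw [h, map_sum]
    simp only [map_smul, smul_eq_mul]
    have h2 : ∀ i, kfstL σ (b j) (b i) = if i = j then 1 else 0 := fun i => hb i j
    simp only [h2, mul_ite, mul_one, mul_zero]
    simp
  simp_rw [hrepr]
  exact b.sum_repr u

noncomputable def wt (σ : ℝ) : Fin 4 → ℝ := ![σ⁻¹, 1, 1, σ⁻¹]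

lemma key {ι : Type} [Fintype ι] [DecidableEq ι] {σ : ℝ} (hσ : 0 < σ)
    (b : Module.Basis ι ℝ (Fin 4 → ℝ)) (hb : Orthonormal' (k16 σ) ⇑b) (p q : Fin 4) :
    ∑ i, b i p * b i q = if p = q then wt σ p else 0 := by
  have hcoef : ∀ v : Fin 4 → ℝ, k16 σ (fun r => if p = r then wt σ p else 0) v = v p := by
    intro v
    fin_cases p <;>
      simp (config := { decide := true }) [k16, wt] <;> field_simp
  have h := complete b hb (fun r => if p = r then wt σ p else 0)
  simp_rw [hcoef] at h
  have h3 := congrFun h q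
  rw [Finset.sum_apply] at h3
  simpa using h3

end RR31aux

/-- (rr_{3,1}, J₂, k₂) is a Hermitian Lie algebra with Lee form
θ₂ = −2e³, and it is locally conformally Kähler: dω₂ = θ₂ ∧ ω₂ and dθ₂ = 0. -/
theorem rr31_lck (σ : ℝ) (hσ : 0 < σ) :
    IsLieBracket br16 ∧
    IsHermitian br16 J16 (k16 σ) ∧
    (∀ (ι : Type) [Fintype ι] [DecidableEq ι] (b : Module.Basis ι ℝ (Fin 4 → ℝ)),
      Orthonormal' (k16 σ) ⇑b →
      ∀ nab, IsLeviCivita (k16 σ) br16 nab →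
        ∀ X, leeForm (⇑b) nab (k16 σ) J16 X = th16 X) ∧
    (∀ u v w, d2 br16 (fund (k16 σ) J16) u v w =
      wedge12 th16 (fund (k16 σ) J16) u v w) ∧
    (∀ u v, d1 br16 th16 u v = 0) := by
  constructor
  · -- Lie bracket
    refine ⟨⟨?_, ?_, ?_, ?_⟩, ?_, ?_⟩
    · intro x y z; funext i; fin_cases i <;>
        simp [br16, Pi.add_apply] <;> ring
    · intro c x z; funext i; fin_cases i <;>
        simp [br16, Pi.smul_apply, smul_eq_mul] <;> ring
    · intro x y z; funext i; fin_cases i <;>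
        simp [br16, Pi.add_apply] <;> ring
    · intro c x z; funext i; fin_cases i <;>
        simp [br16, Pi.smul_apply, smul_eq_mul] <;> ring
    · intro u v; funext i; fin_cases i <;>
        simp [br16, Pi.neg_apply] <;> ring
    · intro u v w; funext i; fin_cases i <;>
        simp [br16, Pi.add_apply, Pi.zero_apply] <;> ring
  refine ⟨?_, ?_, ?_, ?_⟩
  · -- Hermitian
    refine ⟨⟨⟨?_, ?_, ?_, ?_⟩, ?_, ?_⟩, ?_, ?_, ?_⟩
    · intro x y z; simp only [k16, Pi.add_apply]; ring
    · intro c x z; simp only [k16, Pi.smul_apply, smul_eq_mul]; ring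
    · intro x y z; simp only [k16, Pi.add_apply]; ring
    · intro c x z; simp only [k16, Pi.smul_apply, smul_eq_mul]; ring
    · intro u v; simp only [k16]; ring
    · intro u hu
      rcases Function.ne_iff.mp hu with ⟨i, hi⟩
      simp only [Pi.zero_apply] at hi
      simp only [k16]
      have e1 := mul_self_nonneg (u 1)
      have e2 := mul_self_nonneg (u 2)
      have e0 := mul_nonneg hσ.le (mul_self_nonneg (u 0))
      have e3 := mul_nonneg hσ.le (mul_self_nonneg (u 3))
      fin_cases i
      · have h : u 0 ≠ 0 := hi
        nlinarith [mul_pos hσ (mul_self_pos.mpr h)]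
      · have h : u 1 ≠ 0 := hi
        nlinarith [mul_self_pos.mpr h]
      · have h : u 2 ≠ 0 := hi
        nlinarith [mul_self_pos.mpr h]
      · have h : u 3 ≠ 0 := hi
        nlinarith [mul_pos hσ (mul_self_pos.mpr h)]
    · intro u; funext i; fin_cases i <;> simp [J16]
    · intro u v; funext i; fin_cases i <;>
        simp [nijenhuis, br16, J16, Pi.add_apply, Pi.sub_apply, Pi.neg_apply] <;> ring
    · intro u v; simp only [k16, J16, Matrix.cons_val_zero, Matrix.cons_val_one,
        Matrix.head_cons, Matrix.cons_val_two, Matrix.tail_cons, Matrix.cons_val_three]; ring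
  · -- Lee form
    intro ι _ _ b hb nab hnab X
    have hsummand : ∀ a Y : Fin 4 → ℝ,
        fund (k16 σ) J16 (nab a a) Y + fund (k16 σ) J16 a (nab a Y)
          = a 0 * a 2 * Y 1 - a 1 * a 3 * Y 1 - a 0 * a 1 * Y 2 - a 2 * a 3 * Y 2
            + (a 1 * a 1 + a 2 * a 2) * Y 3 := by
      intro a Y
      have h1 := hnab a a (J16 Y)
      have h2 := hnab a Y (J16 a)
      simp only [fund]
      rw [RR31aux.kJ σ (nab a a) Y, RR31aux.ksymm σ (J16 a) (nab a Y)]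
      simp only [k16, br16, J16, Matrix.cons_val_zero, Matrix.cons_val_one, Matrix.head_cons,
        Matrix.cons_val_two, Matrix.tail_cons, Matrix.cons_val_three] at h1 h2 ⊢
      linear_combination (-1/2 : ℝ) * h1 + (1/2 : ℝ) * h2
    have step1 : leeForm (⇑b) nab (k16 σ) J16 X
        = -∑ i, (fund (k16 σ) J16 (nab (b i) (b i)) (J16 X)
            + fund (k16 σ) J16 (b i) (nab (b i) (J16 X))) := by
      simp only [leeForm, codiff, neg_neg]
      rw [← Finset.sum_neg_distrib]
      congr 1
      funext i
      ring
    rw [step1, Finset.sum_congr rfl (fun i _ => hsummand (b i) (J16 X))]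
    simp only [Finset.sum_add_distrib, Finset.sum_sub_distrib, ← Finset.sum_mul]
    rw [RR31aux.key hσ b hb 0 2, RR31aux.key hσ b hb 1 3, RR31aux.key hσ b hb 0 1,
      RR31aux.key hσ b hb 2 3, RR31aux.key hσ b hb 1 1, RR31aux.key hσ b hb 2 2]
    simp (config := { decide := true }) [th16, J16, RR31aux.wt]
    norm_num
  · -- LCK: dω = θ ∧ ω
    intro u v w
    simp only [d2, wedge12, fund, th16, k16, J16, br16, Matrix.cons_val_zero,
      Matrix.cons_val_one, Matrix.head_cons, Matrix.cons_val_two, Matrix.tail_cons,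
      Matrix.cons_val_three]
    ring
  · -- dθ = 0
    intro u v
    simp [d1, th16, br16]
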